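/- Let A be a unital ring, n ≥ 2, and suppose p_1,…,p_{n-1}, q_1,…,q_{n-1} ∈ A satisfy p_j q_k = 0 whenever j ≥ k. Then for any x̃, ỹ ∈ A, the elements x̄ = Σ_{j=1}^{n-1} q_j x̃ p_j and ȳ = Σ_{j=1}^{n-1} q_j ỹ p_j satisfy: every product of n factors, each factor being x̄ or ȳ, is zero. In particular x̄^n = 0, ȳ^n = 0, and (x̄ȳ)^m = 0 whenever 2m ≥ n. -/

import Mathlib

private lemma key_lemma {A : Type*} [Ring A] (n : ℕ)
    (p q : ℕ → A)
    (h : ∀ j k, j ∈ Finset.Icc 1 (n - 1) → k ∈ Finset.Icc 1 (n - 1) → k ≤ j →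
      p j * q k = 0) :
    ∀ ws : List A, ws ≠ [] →
      (∀ a ∈ ws, ∃ z : A, a = ∑ j ∈ Finset.Icc 1 (n - 1), q j * z * p j) →
      ∃ c : ℕ → A, ws.prod = ∑ j ∈ Finset.Icc ws.length (n - 1), c j * p j := by
  intro ws
  induction ws using List.reverseRecOn with
  | nil => intro h1; exact absurd rfl h1
  | append_singleton ws a ih =>
    intro _ hmem
    obtain ⟨z, hz⟩ := hmem a (by simp)
    rcases eq_or_ne ws [] with rfl | hne
    · refine ⟨fun j => q j * z, ?_⟩
      simp [hz, mul_assoc]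
    · obtain ⟨c, hc⟩ := ih hne (fun b hb => hmem b (by simp [hb]))
      have hL : 1 ≤ ws.length := List.length_pos_iff.mpr hne
      have hkill : ∀ i, i ≤ ws.length → i ∈ Finset.Icc 1 (n - 1) →
          ws.prod * q i = 0 := by
        intro i hi hi'
        rw [hc, Finset.sum_mul]
        refine Finset.sum_eq_zero fun j hj => ?_
        rw [mul_assoc, h j i ?_ hi' ?_, mul_zero]
        · exact Finset.mem_Icc.mpr ⟨le_trans hL (Finset.mem_Icc.mp hj).1,
            (Finset.mem_Icc.mp hj).2⟩
        · exact le_trans hi (Finset.mem_Icc.mp hj).1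
      refine ⟨fun i => ws.prod * q i * z, ?_⟩
      rw [List.prod_append, List.prod_singleton, hz, Finset.mul_sum]
      simp only [List.length_append, List.length_singleton]
      have hsub : Finset.Icc (ws.length + 1) (n - 1) ⊆ Finset.Icc 1 (n - 1) :=
        Finset.Icc_subset_Icc (by omega) le_rfl
      rw [← Finset.sum_subset hsub ?_]
      · exact Finset.sum_congr rfl fun i _ => by simp [mul_assoc]
      · intro i hi hni
        have hile : i ≤ ws.length := by
          simp only [Finset.mem_Icc] at hi hni; omega
        have : ws.prod * (q i * z * p i) = (ws.prod * q i) * (z * p i) := by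
          simp [mul_assoc]
        rw [this, hkill i hile hi, zero_mul]

theorem stmt15 {A : Type*} [Ring A] (n : ℕ) (hn : 2 ≤ n)
    (p q : ℕ → A)
    (h : ∀ j k, j ∈ Finset.Icc 1 (n - 1) → k ∈ Finset.Icc 1 (n - 1) → k ≤ j →
      p j * q k = 0)
    (x y : A) :
    (∀ w : Fin n → A,
      (∀ i, w i = ∑ j ∈ Finset.Icc 1 (n - 1), q j * x * p j ∨
            w i = ∑ j ∈ Finset.Icc 1 (n - 1), q j * y * p j) →
      (List.ofFn w).prod = 0) ∧
    (∑ j ∈ Finset.Icc 1 (n - 1), q j * x * p j) ^ n = 0 ∧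
    (∑ j ∈ Finset.Icc 1 (n - 1), q j * y * p j) ^ n = 0 ∧
    (∀ m : ℕ, n ≤ 2 * m →
      ((∑ j ∈ Finset.Icc 1 (n - 1), q j * x * p j) *
        (∑ j ∈ Finset.Icc 1 (n - 1), q j * y * p j)) ^ m = 0) := by
  set Sx := ∑ j ∈ Finset.Icc 1 (n - 1), q j * x * p j with hSx
  set Sy := ∑ j ∈ Finset.Icc 1 (n - 1), q j * y * p j with hSy
  -- a general consequence of the key lemma
  have main : ∀ ws : List A, n ≤ ws.length →
      (∀ a ∈ ws, a = Sx ∨ a = Sy) → ws.prod = 0 := by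
    intro ws hlen hmem
    have hne : ws ≠ [] := by
      intro hnil; rw [hnil] at hlen; simp at hlen; omega
    obtain ⟨c, hc⟩ := key_lemma n p q h ws hne (by
      intro a ha
      rcases hmem a ha with rfl | rfl
      exacts [⟨x, hSx⟩, ⟨y, hSy⟩])
    rw [hc, Finset.Icc_eq_empty (by omega), Finset.sum_empty]
  have part1 : ∀ w : Fin n → A,
      (∀ i, w i = Sx ∨ w i = Sy) → (List.ofFn w).prod = 0 := by
    intro w hw
    refine main _ (by simp) ?_
    intro a ha
    obtain ⟨i, rfl⟩ := List.mem_ofFn.mp ha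
    exact hw i
  refine ⟨part1, ?_, ?_, ?_⟩
  · rw [← List.prod_replicate]
    exact main _ (by simp) (by intro a ha; left; exact (List.eq_of_mem_replicate ha))
  · rw [← List.prod_replicate]
    exact main _ (by simp) (by intro a ha; right; exact (List.eq_of_mem_replicate ha))
  · intro m hm
    have aux : ∀ k : ℕ, ∃ ws : List A, ws.length = 2 * k ∧
        (∀ a ∈ ws, a = Sx ∨ a = Sy) ∧ ws.prod = (Sx * Sy) ^ k := by
      intro k
      induction k with
      | zero => exact ⟨[], by simp, by simp, by simp⟩
      | succ k ihk =>
        obtain ⟨ws, hl, hm', hp⟩ := ihk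
        refine ⟨Sx :: Sy :: ws, by simp [hl]; omega, ?_, ?_⟩
        · intro a ha
          simp only [List.mem_cons] at ha
          rcases ha with rfl | rfl | ha
          exacts [Or.inl rfl, Or.inr rfl, hm' a ha]
        · rw [List.prod_cons, List.prod_cons, hp, ← mul_assoc, ← pow_succ']
    obtain ⟨ws, hl, hm', hp⟩ := aux m
    rw [← hp]
    exact main _ (by omega) hm'
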